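/- There exists a constant C > 0 such that for all integers q ≥ 2 and k ≥ 1 with q² ≤ k, | ∑_{c=0}^{q−1} S^{q}_{k}(c,c) − ∑_{d=1}^{q−1} S^{q−1}_{k}(d+1,d) − ∑_{m=k³}^{(k+1)³} μ(m)² | ≤ C·q². -/

import Mathlib

/-- The Liouville function `λ(n) = (−1)^{Ω(n)}`. -/
def liouville (n : ℕ) : ℤ := (-1) ^ (ArithmeticFunction.cardFactors n)

/-- `L_{k,q} := ⌊((k+1)³ − k³)/q⌋ − 1`. -/
def Lkq (k q : ℕ) : ℕ := ((k + 1) ^ 3 - k ^ 3) / q - 1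

/-- `S^q_k(r,c) := ∑_{b=r}^{q−1+r} ∑_{j=0}^{L_{k,q}} λ(qj+c+k³)·μ(qj+b+k³)`. -/
def Sqk (q k r c : ℕ) : ℤ :=
  ∑ b ∈ Finset.Icc r (q - 1 + r), ∑ j ∈ Finset.range (Lkq k q + 1),
    liouville (q * j + c + k ^ 3) * ArithmeticFunction.moebius (q * j + b + k ^ 3)

open Finset
open ArithmeticFunction hiding liouville
open scoped ArithmeticFunction.Moebius

lemma liouville_abs (n : ℕ) : |liouville n| = 1 := by
  simp [liouville, abs_pow]

lemma aux_abs_le (n m : ℕ) : |liouville n * (μ m : ℤ)| ≤ 1 := by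
  rw [abs_mul, liouville_abs, one_mul]; exact abs_moebius_le_one

lemma liouville_mul_moebius (n : ℕ) : liouville n * μ n = μ n ^ 2 := by
  by_cases h : Squarefree n
  · rw [moebius_apply_of_squarefree h, liouville]; ring
  · rw [moebius_eq_zero_of_not_squarefree h]; ring

lemma my_sum_Icc (f : ℕ → ℤ) (a b : ℕ) :
    ∑ i ∈ Finset.Icc a b, f i = ∑ i ∈ range (b + 1 - a), f (a + i) := by
  rw [← Finset.Ico_add_one_right_eq_Icc, Finset.sum_Ico_eq_sum_range]

/-- unfold grid sum into a single range sum -/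
lemma sum_grid (g : ℕ → ℤ) (q : ℕ) : ∀ m : ℕ,
    ∑ j ∈ range m, ∑ c ∈ range q, g (q * j + c) = ∑ i ∈ range (q * m), g i := by
  intro m
  induction m with
  | zero => simp
  | succ m ih =>
      rw [Finset.sum_range_succ, ih, Nat.mul_succ, Finset.sum_range_add]

lemma abs_sum_le_card (s : Finset ℕ) (f : ℕ → ℤ) (h : ∀ i, |f i| ≤ 1) :
    |∑ i ∈ s, f i| ≤ s.card := by
  calc |∑ i ∈ s, f i| ≤ ∑ i ∈ s, |f i| := Finset.abs_sum_le_sum_abs _ _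
    _ ≤ ∑ i ∈ s, 1 := Finset.sum_le_sum (fun i _ => h i)
    _ = s.card := by simp

lemma abs_sum_range_sub (f : ℕ → ℤ) (h : ∀ i, |f i| ≤ 1) (a b : ℕ) :
    |∑ i ∈ range a, f i - ∑ i ∈ range b, f i| ≤ |(a : ℤ) - b| := by
  rcases le_total a b with hab | hab
  · rw [abs_sub_comm, ← Finset.sum_Ico_eq_sub _ hab]
    calc |∑ i ∈ Ico a b, f i| ≤ (Ico a b).card := abs_sum_le_card _ _ h
      _ = ((b - a : ℕ) : ℤ) := by simp [Nat.card_Ico]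
      _ ≤ |(a : ℤ) - b| := by
          rw [abs_sub_comm,
            abs_of_nonneg (sub_nonneg.2 (by exact_mod_cast hab : (a:ℤ) ≤ b))]
          push_cast [hab]; omega
  · rw [← Finset.sum_Ico_eq_sub _ hab]
    calc |∑ i ∈ Ico b a, f i| ≤ (Ico b a).card := abs_sum_le_card _ _ h
      _ = ((a - b : ℕ) : ℤ) := by simp [Nat.card_Ico]
      _ ≤ |(a : ℤ) - b| := by
          rw [abs_of_nonneg (sub_nonneg.2 (by exact_mod_cast hab : (b:ℤ) ≤ a))]
          push_cast [hab]; omega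

/-- the difference of the two diagonal correlation sums equals the
count of squarefree numbers in `[k³,(k+1)³]`, up to an error `O(q²)`. -/
theorem stmt_13 :
    ∃ C : ℝ, 0 < C ∧ ∀ q k : ℕ, 2 ≤ q → 1 ≤ k → q ^ 2 ≤ k →
      |((∑ c ∈ Finset.range q, Sqk q k c c : ℤ) : ℝ) -
          ((∑ d ∈ Finset.Icc 1 (q - 1), Sqk (q - 1) k (d + 1) d : ℤ) : ℝ) -
          ∑ m ∈ Finset.Icc (k ^ 3) ((k + 1) ^ 3),
            (ArithmeticFunction.moebius m : ℝ) ^ 2| ≤ C * q ^ 2 := by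
  refine ⟨4, by norm_num, fun q k hq hk hqk => ?_⟩
  set N : ℕ := 3 * k ^ 2 + 3 * k + 1 with hN
  have hcube : (k + 1) ^ 3 - k ^ 3 = N := by
    have h : (k + 1) ^ 3 = k ^ 3 + (3 * k ^ 2 + 3 * k + 1) := by ring
    omega
  have hqN : q ≤ N := by nlinarith
  have hq1N : q - 1 ≤ N := by omega
  set g : ℕ → ℕ → ℤ := fun d i => liouville (i + k ^ 3) * μ (i + d + k ^ 3) with hg
  have hgabs : ∀ d i, |g d i| ≤ 1 := fun d i => aux_abs_le _ _
  set P : ℕ := q * (Lkq k q + 1) with hP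
  set P' : ℕ := (q - 1) * (Lkq k (q - 1) + 1) with hP'
  have hL : Lkq k q + 1 = N / q := by
    rw [Lkq, hcube]
    have : 1 ≤ N / q := (Nat.one_le_div_iff (by omega)).2 hqN
    omega
  have hL' : Lkq k (q - 1) + 1 = N / (q - 1) := by
    rw [Lkq, hcube]
    have : 1 ≤ N / (q - 1) := (Nat.one_le_div_iff (by omega)).2 hq1N
    omega
  have hPb : P ≤ N ∧ N < P + q := by
    have h1 := Nat.div_add_mod N q
    have h2 : N % q < q := Nat.mod_lt _ (by omega)
    rw [hP, hL]
    generalize q * (N / q) = y at h1 ⊢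
    generalize N % q = r at h1 h2
    omega
  have hP'b : P' ≤ N ∧ N < P' + (q - 1) := by
    have h1 := Nat.div_add_mod N (q - 1)
    have h2 : N % (q - 1) < q - 1 := Nat.mod_lt _ (by omega)
    rw [hP', hL']
    generalize (q - 1) * (N / (q - 1)) = y at h1 ⊢
    generalize N % (q - 1) = r at h1 h2
    omega
  clear_value P P' N
  -- Step A
  have hA : (∑ c ∈ range q, Sqk q k c c) = ∑ d ∈ range q, ∑ i ∈ range P, g d i := by
    have step : ∀ c, Sqk q k c c =
        ∑ d ∈ range q, ∑ j ∈ range (Lkq k q + 1), g d (q * j + c) := by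
      intro c
      rw [Sqk, my_sum_Icc]
      have hcard : q - 1 + c + 1 - c = q := by omega
      rw [hcard]
      refine Finset.sum_congr rfl (fun d _ => Finset.sum_congr rfl (fun j _ => ?_))
      rw [hg]
      congr 2 <;> omega
    calc (∑ c ∈ range q, Sqk q k c c)
        = ∑ c ∈ range q, ∑ d ∈ range q, ∑ j ∈ range (Lkq k q + 1), g d (q * j + c) :=
          Finset.sum_congr rfl (fun c _ => step c)
      _ = ∑ d ∈ range q, ∑ j ∈ range (Lkq k q + 1), ∑ c ∈ range q, g d (q * j + c) := by
          rw [Finset.sum_comm]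
          exact Finset.sum_congr rfl (fun d _ => Finset.sum_comm)
      _ = ∑ d ∈ range q, ∑ i ∈ range P, g d i := by
          rw [hP]
          exact Finset.sum_congr rfl (fun d _ => sum_grid _ _ _)
  -- Step B
  have hB : (∑ d ∈ Finset.Icc 1 (q - 1), Sqk (q - 1) k (d + 1) d)
      = ∑ e ∈ range (q - 1), ∑ i ∈ range P', g (e + 1) (i + 1) := by
    have step : ∀ d, Sqk (q - 1) k (d + 1) d =
        ∑ e ∈ range (q - 1), ∑ j ∈ range (Lkq k (q-1) + 1), g (e + 1) ((q-1) * j + d) := by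
      intro d
      rw [Sqk, my_sum_Icc]
      have hcard : q - 1 - 1 + (d + 1) + 1 - (d + 1) = q - 1 := by omega
      rw [hcard]
      refine Finset.sum_congr rfl (fun e _ => Finset.sum_congr rfl (fun j _ => ?_))
      rw [hg]
      congr 2 <;> omega
    calc (∑ d ∈ Finset.Icc 1 (q - 1), Sqk (q - 1) k (d + 1) d)
        = ∑ d ∈ Finset.Icc 1 (q-1), ∑ e ∈ range (q - 1),
            ∑ j ∈ range (Lkq k (q-1) + 1), g (e + 1) ((q-1) * j + d) :=
          Finset.sum_congr rfl (fun d _ => step d)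
      _ = ∑ e ∈ range (q - 1), ∑ d ∈ Finset.Icc 1 (q-1),
            ∑ j ∈ range (Lkq k (q-1) + 1), g (e + 1) ((q-1) * j + d) := Finset.sum_comm
      _ = ∑ e ∈ range (q - 1), ∑ i ∈ range P', g (e + 1) (i + 1) := by
          refine Finset.sum_congr rfl (fun e _ => ?_)
          rw [my_sum_Icc]
          have hcard : q - 1 + 1 - 1 = q - 1 := by omega
          rw [hcard, hP', Finset.sum_comm, ← sum_grid (fun i => g (e+1) (i+1)) (q-1)]
          refine Finset.sum_congr rfl (fun j _ => Finset.sum_congr rfl (fun d' _ => ?_))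
          congr 1
          omega
  have hT : (∑ m ∈ Finset.Icc (k ^ 3) ((k + 1) ^ 3), ((μ m : ℤ)) ^ 2)
      = ∑ i ∈ range (N + 1), (μ (i + k ^ 3) : ℤ) ^ 2 := by
    rw [my_sum_Icc]
    have : (k+1) ^ 3 + 1 - k ^ 3 = N + 1 := by omega
    rw [this]
    exact Finset.sum_congr rfl (fun i _ => by rw [add_comm])
  have hdiag : (∑ i ∈ range P, g 0 i) = ∑ i ∈ range P, (μ (i + k ^ 3) : ℤ) ^ 2 := by
    refine Finset.sum_congr rfl (fun i _ => ?_)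
    rw [hg]; simp only [add_zero]
    exact liouville_mul_moebius _
  have hAsplit : (∑ d ∈ range q, ∑ i ∈ range P, g d i)
      = (∑ i ∈ range P, g 0 i) + ∑ e ∈ range (q - 1), ∑ i ∈ range P, g (e + 1) i := by
    have h0 : (∑ d ∈ range q, ∑ i ∈ range P, g d i)
        = ∑ d ∈ range ((q - 1) + 1), ∑ i ∈ range P, g d i := by
      rw [show q - 1 + 1 = q by omega]
    rw [h0, Finset.sum_range_succ', add_comm]
  have key : |(∑ c ∈ range q, Sqk q k c c)
      - (∑ d ∈ Finset.Icc 1 (q - 1), Sqk (q - 1) k (d + 1) d)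
      - ∑ m ∈ Finset.Icc (k ^ 3) ((k + 1) ^ 3), ((μ m : ℤ)) ^ 2| ≤ 4 * (q:ℤ) ^ 2 := by
    rw [hA, hB, hT, hAsplit, hdiag]
    have e1 : |(∑ i ∈ range P, (μ (i + k ^ 3) : ℤ) ^ 2)
        - ∑ i ∈ range (N + 1), (μ (i + k ^ 3) : ℤ) ^ 2| ≤ (q : ℤ) := by
      have h1 : ∀ i, |(μ (i + k ^ 3) : ℤ) ^ 2| ≤ 1 := by
        intro i
        rw [abs_pow]
        calc |(μ (i + k^3) : ℤ)| ^ 2 ≤ 1 ^ 2 :=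
          pow_le_pow_left₀ (abs_nonneg _) abs_moebius_le_one 2
          _ = 1 := one_pow 2
      calc |(∑ i ∈ range P, (μ (i + k ^ 3) : ℤ) ^ 2)
          - ∑ i ∈ range (N + 1), (μ (i + k ^ 3) : ℤ) ^ 2| ≤ |(P : ℤ) - (N+1)| :=
            abs_sum_range_sub _ h1 _ _
        _ ≤ (q : ℤ) := by
            rw [abs_sub_comm, abs_of_nonneg (by push_cast; omega : (0:ℤ) ≤ ((N:ℤ)+1) - P)]
            push_cast
            omega
    have e2 : ∀ e ∈ range (q - 1),
        |(∑ i ∈ range P, g (e+1) i) - ∑ i ∈ range P', g (e + 1) (i + 1)| ≤ (q : ℤ) + 1 := by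
      intro e _
      have hshift : (∑ i ∈ range P', g (e + 1) (i + 1))
          = (∑ i ∈ range (P' + 1), g (e+1) i) - g (e+1) 0 := by
        rw [Finset.sum_range_succ']
        ring
      rw [hshift]
      have hre : (∑ i ∈ range P, g (e+1) i) - ((∑ i ∈ range (P' + 1), g (e+1) i) - g (e+1) 0)
          = ((∑ i ∈ range P, g (e+1) i) - (∑ i ∈ range (P' + 1), g (e+1) i)) + g (e+1) 0 := by
        ring
      rw [hre]
      calc |((∑ i ∈ range P, g (e+1) i) - (∑ i ∈ range (P' + 1), g (e+1) i)) + g (e+1) 0|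
          ≤ |(∑ i ∈ range P, g (e+1) i) - (∑ i ∈ range (P' + 1), g (e+1) i)| + |g (e+1) 0| :=
            abs_add_le _ _
        _ ≤ |(P : ℤ) - (P' + 1)| + 1 :=
            add_le_add (abs_sum_range_sub _ (hgabs _) _ _) (hgabs _ _)
        _ ≤ (q : ℤ) + 1 := by
            have h1 := hPb.1; have h2 := hPb.2; have h3 := hP'b.1; have h4 := hP'b.2
            have habs : |(P:ℤ) - ((P':ℤ) + 1)| ≤ (q:ℤ) := by
              rw [abs_sub_le_iff]
              constructor <;> push_cast <;> omega
            linarith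
    have e2' : |(∑ e ∈ range (q-1), ∑ i ∈ range P, g (e+1) i)
        - ∑ e ∈ range (q - 1), ∑ i ∈ range P', g (e + 1) (i + 1)|
        ≤ ((q : ℤ) - 1) * ((q:ℤ) + 1) := by
      rw [← Finset.sum_sub_distrib]
      calc |∑ e ∈ range (q-1), ((∑ i ∈ range P, g (e+1) i)
            - ∑ i ∈ range P', g (e + 1) (i + 1))|
          ≤ ∑ e ∈ range (q-1), |(∑ i ∈ range P, g (e+1) i)
            - ∑ i ∈ range P', g (e + 1) (i + 1)| := Finset.abs_sum_le_sum_abs _ _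
        _ ≤ ∑ e ∈ range (q-1), ((q : ℤ) + 1) := Finset.sum_le_sum e2
        _ = ((q : ℤ) - 1) * ((q:ℤ) + 1) := by
            rw [Finset.sum_const, Finset.card_range, nsmul_eq_mul]
            push_cast [Nat.cast_sub (by omega : 1 ≤ q)]
            ring
    have rearr : (∑ i ∈ range P, (μ (i + k ^ 3) : ℤ) ^ 2)
          + (∑ e ∈ range (q-1), ∑ i ∈ range P, g (e+1) i)
        - (∑ e ∈ range (q - 1), ∑ i ∈ range P', g (e + 1) (i + 1))
        - ∑ i ∈ range (N + 1), (μ (i + k ^ 3) : ℤ) ^ 2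
        = ((∑ i ∈ range P, (μ (i + k ^ 3) : ℤ) ^ 2)
            - ∑ i ∈ range (N + 1), (μ (i + k ^ 3) : ℤ) ^ 2)
          + ((∑ e ∈ range (q-1), ∑ i ∈ range P, g (e+1) i)
            - ∑ e ∈ range (q - 1), ∑ i ∈ range P', g (e + 1) (i + 1)) := by ring
    rw [rearr]
    calc |_| ≤ _ := abs_add_le _ _
      _ ≤ (q:ℤ) + ((q : ℤ) - 1) * ((q:ℤ) + 1) := add_le_add e1 e2'
      _ ≤ 4 * (q:ℤ) ^ 2 := by nlinarith [show (2:ℤ) ≤ q from by exact_mod_cast hq]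
  have cast : ((∑ c ∈ Finset.range q, Sqk q k c c : ℤ) : ℝ) -
          ((∑ d ∈ Finset.Icc 1 (q - 1), Sqk (q - 1) k (d + 1) d : ℤ) : ℝ) -
          (∑ m ∈ Finset.Icc (k ^ 3) ((k + 1) ^ 3), (μ m : ℝ) ^ 2)
      = (((∑ c ∈ range q, Sqk q k c c)
        - (∑ d ∈ Finset.Icc 1 (q - 1), Sqk (q - 1) k (d + 1) d)
        - ∑ m ∈ Finset.Icc (k ^ 3) ((k + 1) ^ 3), ((μ m : ℤ)) ^ 2 : ℤ) : ℝ) := by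
    push_cast
    ring
  rw [cast, ← Int.cast_abs]
  exact_mod_cast key
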